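/- Define f_ν(x) = ∫_{π[o,x]} n(H) dν(H), where n(H) is the unit normal of H pointing away from the halfspace containing the basepoint o. Then for all x, y ∈ Ω, |f_ν(x) − f_ν(y)| ≤ ν(π[x,y]); that is, f_ν is 1-Lipschitz from (Ω, d_ν) to ℝⁿ. -/

import Mathlib

open MeasureTheory Set

noncomputable section

/-- Euclidean space `ℝⁿ`. -/
abbrev Euc (n : ℕ) := EuclideanSpace ℝ (Fin n)

/-- The space of affine hyperplanes in `ℝⁿ`, encoded as pairs `(v, c)` with `‖v‖ = 1`,
representing the hyperplane `{x : ⟪x, v⟫ = c}`. -/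
abbrev Hyp (n : ℕ) := {p : Euc n × ℝ // ‖p.1‖ = 1}

/-- The hyperplane determined by `H`, as a subset of `ℝⁿ`. -/
def hset {n : ℕ} (H : Hyp n) : Set (Euc n) := {x | (inner ℝ x H.1.1 : ℝ) = H.1.2}

/-- `meets A = π A`: the set of hyperplanes intersecting `A`. -/
def meets {n : ℕ} (A : Set (Euc n)) : Set (Hyp n) := {H | (hset H ∩ A).Nonempty}

/-- The unit normal of `H` pointing out of the halfspace containing the basepoint `o`. -/
def nrm {n : ℕ} (o : Euc n) (H : Hyp n) : Euc n :=
  if (inner ℝ o H.1.1 : ℝ) < H.1.2 then H.1.1 else -H.1.1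

/-- `fnu ν o x = ∫_{π[o,x]} n(H) dν(H)`. -/
def fnu {n : ℕ} (ν : Measure (Hyp n)) (o : Euc n) (x : Euc n) : Euc n :=
  ∫ H in meets (segment ℝ o x), nrm o H ∂ν

/-- `sin α(v, H) = |⟪v, n(H)⟫| / |v|`, the sine of the angle between the line of `v`
and the hyperplane `H`. -/
def sinA {n : ℕ} (v : Euc n) (H : Hyp n) : ℝ := |(inner ℝ v H.1.1 : ℝ)| / ‖v‖

/-! ### Auxiliary lemmas -/

lemma seg_back {u w t : ℝ} (ht0 : 0 ≤ t) (ht1 : t ≤ 1) (h : (1-t)*u + t*w = 0) : u * w ≤ 0 := by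
  have e1 : ((1-t)*u + t*w) * u = 0 := by rw [h]; ring
  have e2 : ((1-t)*u + t*w) * w = 0 := by rw [h]; ring
  nlinarith [mul_nonneg (by linarith : (0:ℝ) ≤ 1 - t) (sq_nonneg u), mul_nonneg ht0 (sq_nonneg w)]

lemma seg_fwd {u w : ℝ} (h : u * w ≤ 0) : ∃ t : ℝ, 0 ≤ t ∧ t ≤ 1 ∧ (1-t)*u + t*w = 0 := by
  rcases mul_nonpos_iff.mp h with ⟨h1, h2⟩ | ⟨h1, h2⟩
  · by_cases h0 : u - w = 0
    · refine ⟨0, le_refl 0, zero_le_one, ?_⟩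
      have : u = 0 := le_antisymm (by linarith) h1
      rw [this]; ring
    · have hpos : 0 < u - w := lt_of_le_of_ne (by linarith) (Ne.symm h0)
      refine ⟨u / (u - w), div_nonneg h1 hpos.le, (div_le_one hpos).2 (by linarith), ?_⟩
      field_simp
      ring
  · by_cases h0 : w - u = 0
    · refine ⟨0, le_refl 0, zero_le_one, ?_⟩
      have : u = 0 := le_antisymm h1 (by linarith)
      rw [this]; ring
    · have hpos : 0 < w - u := lt_of_le_of_ne (by linarith) (Ne.symm h0)
      refine ⟨(-u) / (w - u), div_nonneg (by linarith) hpos.le, (div_le_one hpos).2 (by linarith), ?_⟩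
      field_simp
      ring

lemma sign_lemma {p q r : ℝ} (h1 : p*q ≤ 0) (h2 : 0 < p*r) : q*r ≤ 0 := by
  have hp2 : 0 < p*p := by
    rcases mul_pos_iff.mp h2 with ⟨ha,hb⟩|⟨ha,hb⟩
    exacts [mul_pos ha ha, mul_pos_of_neg_of_neg ha ha]
  have key : (p*q)*(p*r) ≤ 0 := mul_nonpos_iff.mpr (Or.inr ⟨h1, h2.le⟩)
  nlinarith [key, hp2]

lemma inner_combo {n : ℕ} (a b v : Euc n) (t : ℝ) :
    (inner ℝ ((1-t) • a + t • b) v : ℝ) = (1-t) * (inner ℝ a v : ℝ) + t * (inner ℝ b v : ℝ) := by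
  rw [inner_add_left, real_inner_smul_left, real_inner_smul_left]

lemma mem_meets_segment {n : ℕ} {a b : Euc n} {H : Hyp n} :
    H ∈ meets (segment ℝ a b) ↔
      ((inner ℝ a H.1.1 : ℝ) - H.1.2) * ((inner ℝ b H.1.1 : ℝ) - H.1.2) ≤ 0 := by
  constructor
  · rintro ⟨z, hz, hzseg⟩
    rw [segment_eq_image] at hzseg
    obtain ⟨t, ⟨ht0, ht1⟩, rfl⟩ := hzseg
    have hz' : (inner ℝ ((1-t) • a + t • b) H.1.1 : ℝ) = H.1.2 := hz
    rw [inner_combo] at hz'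
    exact seg_back ht0 ht1 (by linarith [hz'])
  · intro h
    obtain ⟨t, ht0, ht1, ht⟩ := seg_fwd h
    refine ⟨(1 - t) • a + t • b, ?_, by rw [segment_eq_image]; exact ⟨t, ⟨ht0, ht1⟩, rfl⟩⟩
    show (inner ℝ ((1-t) • a + t • b) H.1.1 : ℝ) = H.1.2
    rw [inner_combo]
    linarith [ht]

lemma measurableSet_meets_segment {n : ℕ} (a b : Euc n) :
    MeasurableSet (meets (segment ℝ a b)) := by
  have : meets (segment ℝ a b) = Subtype.val ⁻¹'
      {p : Euc n × ℝ | ((inner ℝ a p.1 : ℝ) - p.2) * ((inner ℝ b p.1 : ℝ) - p.2) ≤ 0} := by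
    ext H; exact mem_meets_segment
  rw [this]
  apply measurable_subtype_coe
  apply measurableSet_le
  · exact (((continuous_const.inner continuous_fst).sub continuous_snd).mul
      ((continuous_const.inner continuous_fst).sub continuous_snd)).measurable
  · exact measurable_const

lemma measurable_nrm {n : ℕ} (o : Euc n) : Measurable (nrm o) := by
  have : nrm o = (fun p : Euc n × ℝ => if (inner ℝ o p.1 : ℝ) < p.2 then p.1 else -p.1) ∘
      Subtype.val := rfl
  rw [this]
  apply Measurable.comp _ measurable_subtype_coe
  exact Measurable.ite
    (measurableSet_lt (continuous_const.inner continuous_fst).measurable measurable_snd)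
    measurable_fst measurable_fst.neg

lemma norm_nrm {n : ℕ} (o : Euc n) (H : Hyp n) : ‖nrm o H‖ = 1 := by
  unfold nrm; split_ifs <;> simp [H.2]

lemma integrableOn_nrm {n : ℕ} (ν : Measure (Hyp n)) (o : Euc n) {s : Set (Hyp n)}
    (hs : ν s < ⊤) : IntegrableOn (nrm o) s ν := by
  refine Integrable.mono' (g := fun _ => (1:ℝ)) (integrableOn_const hs.ne)
    ((measurable_nrm o).aestronglyMeasurable) ?_
  exact Filter.Eventually.of_forall fun H => (norm_nrm o H).le

lemma isCompact_seg {n : ℕ} (a b : Euc n) : IsCompact (segment ℝ a b) := by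
  rw [segment_eq_image]
  exact isCompact_Icc.image (by continuity)

/-- `|f_ν(x) − f_ν(y)| ≤ ν(π[x,y])`, i.e. `f_ν` is 1-Lipschitz from
`(Ω, d_ν)` to `ℝⁿ`. -/
theorem stmt3 (n : ℕ) (hn : 2 ≤ n) (Ω : Set (Euc n)) (hΩo : IsOpen Ω) (hΩne : Ω.Nonempty)
    (hΩc : Convex ℝ Ω) (ν : Measure (Hyp n))
    (hpt : ∀ p ∈ Ω, ν (meets {p}) = 0)
    (hseg : ∀ x ∈ Ω, ∀ y ∈ Ω, x ≠ y → 0 < ν (meets (segment ℝ x y)))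
    (hcpt : ∀ K ⊆ Ω, IsCompact K → ν (meets K) < ⊤)
    (o : Euc n) (ho : o ∈ Ω) :
    ∀ x ∈ Ω, ∀ y ∈ Ω, ‖fnu ν o x - fnu ν o y‖ ≤ (ν (meets (segment ℝ x y))).toReal := by
  intro x hx y hy
  set A := meets (segment ℝ o x) with hA
  set B := meets (segment ℝ o y) with hB
  set C := meets (segment ℝ x y) with hC
  have hmA : MeasurableSet A := measurableSet_meets_segment o x
  have hmB : MeasurableSet B := measurableSet_meets_segment o y
  have hfinA : ν A < ⊤ := hcpt _ (hΩc.segment_subset ho hx) (isCompact_seg o x)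
  have hfinB : ν B < ⊤ := hcpt _ (hΩc.segment_subset ho hy) (isCompact_seg o y)
  have hfinC : ν C < ⊤ := hcpt _ (hΩc.segment_subset hx hy) (isCompact_seg x y)
  have hABC : A \ B ⊆ C := by
    rintro H ⟨hHA, hHB⟩
    rw [hA, mem_meets_segment] at hHA
    rw [hB, mem_meets_segment] at hHB
    rw [hC, mem_meets_segment]
    push_neg at hHB
    exact sign_lemma hHA hHB
  have hBAC : B \ A ⊆ C := by
    rintro H ⟨hHB, hHA⟩
    rw [hB, mem_meets_segment] at hHB
    rw [hA, mem_meets_segment] at hHA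
    rw [hC, mem_meets_segment]
    push_neg at hHA
    have := sign_lemma hHB hHA
    linarith [this]
  have hIA : IntegrableOn (nrm o) A ν := integrableOn_nrm ν o hfinA
  have hIB : IntegrableOn (nrm o) B ν := integrableOn_nrm ν o hfinB
  have disj1 : Disjoint (A \ B) (A ∩ B) := disjoint_sdiff_left.mono_right inter_subset_right
  have disj2 : Disjoint (B \ A) (B ∩ A) := disjoint_sdiff_left.mono_right inter_subset_right
  have eqA : ∫ H in A, nrm o H ∂ν
      = (∫ H in A \ B, nrm o H ∂ν) + ∫ H in A ∩ B, nrm o H ∂ν := by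
    conv_lhs => rw [← diff_union_inter A B]
    exact setIntegral_union disj1 (hmA.inter hmB)
      (hIA.mono_set diff_subset) (hIA.mono_set inter_subset_left)
  have eqB : ∫ H in B, nrm o H ∂ν
      = (∫ H in B \ A, nrm o H ∂ν) + ∫ H in A ∩ B, nrm o H ∂ν := by
    conv_lhs => rw [← diff_union_inter B A]
    rw [inter_comm A B]
    exact setIntegral_union disj2 (hmB.inter hmA)
      (hIB.mono_set diff_subset) (hIB.mono_set inter_subset_left)
  have key : fnu ν o x - fnu ν o y
      = (∫ H in A \ B, nrm o H ∂ν) - ∫ H in B \ A, nrm o H ∂ν := by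
    show (∫ H in A, nrm o H ∂ν) - (∫ H in B, nrm o H ∂ν) = _
    rw [eqA, eqB]; abel
  have hfAB : ν (A \ B) < ⊤ := lt_of_le_of_lt (measure_mono diff_subset) hfinA
  have hfBA : ν (B \ A) < ⊤ := lt_of_le_of_lt (measure_mono diff_subset) hfinB
  have bnd1 : ‖∫ H in A \ B, nrm o H ∂ν‖ ≤ (ν (A \ B)).toReal := by
    have := norm_setIntegral_le_of_norm_le_const (C := 1) hfAB
      (fun H _ => (norm_nrm o H).le)
    simpa [Measure.real] using this
  have bnd2 : ‖∫ H in B \ A, nrm o H ∂ν‖ ≤ (ν (B \ A)).toReal := by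
    have := norm_setIntegral_le_of_norm_le_const (C := 1) hfBA
      (fun H _ => (norm_nrm o H).le)
    simpa [Measure.real] using this
  have hsum : ν (A \ B) + ν (B \ A) ≤ ν C := by
    rw [← measure_union disjoint_sdiff_sdiff (hmB.diff hmA)]
    exact measure_mono (union_subset hABC hBAC)
  calc ‖fnu ν o x - fnu ν o y‖
      ≤ ‖∫ H in A \ B, nrm o H ∂ν‖ + ‖∫ H in B \ A, nrm o H ∂ν‖ := by
        rw [key]; exact norm_sub_le _ _
    _ ≤ (ν (A \ B)).toReal + (ν (B \ A)).toReal := add_le_add bnd1 bnd2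
    _ = (ν (A \ B) + ν (B \ A)).toReal := (ENNReal.toReal_add hfAB.ne hfBA.ne).symm
    _ ≤ (ν C).toReal := ENNReal.toReal_mono hfinC.ne hsum
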